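/- Let (K_i)_{i∈{0,...,m}} be a simplex-wise filtration of simplicial complexes, and suppose K_i = K_{i-1} ∪ {σ_i} where σ_i is a q-simplex. Then exactly one of the following occurs: σ_i kills a homology class of degree q-1, or σ_i gives birth to a homology class of degree q. -/

import Mathlib

set_option maxSynthPendingDepth 2

/-! Simplicial ℤ/2 chains and homology machinery. -/

/-- Chains with `ℤ/2` coefficients, formal sums of finite subsets of `V`. -/
abbrev Ch (V : Type*) := Finset V →₀ ZMod 2

/-- The simplicial boundary operator: a simplex with at least two vertices is sent
to the sum of its codimension-1 faces; vertices are sent to `0`. -/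
noncomputable def bdry (V : Type*) [DecidableEq V] : Ch V →ₗ[ZMod 2] Ch V :=
  Finsupp.linearCombination (ZMod 2) fun σ : Finset V =>
    if σ.card ≤ 1 then 0 else ∑ v ∈ σ, Finsupp.single (σ.erase v) (1 : ZMod 2)

/-- A simplicial complex: a collection of nonempty finite subsets of `V`
closed under taking nonempty subsets. -/
def IsComplex {V : Type*} (K : Set (Finset V)) : Prop :=
  ∀ σ ∈ K, σ.Nonempty ∧ ∀ τ ⊆ σ, τ.Nonempty → τ ∈ K

/-- The space of chains supported on simplices of `K` with `k` vertices
(i.e. the simplicial chain group of degree `k - 1`). -/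
noncomputable def chainCard {V : Type*} [DecidableEq V] (K : Set (Finset V)) (k : ℕ) :
    Submodule (ZMod 2) (Ch V) :=
  Submodule.span (ZMod 2) {f | ∃ σ ∈ K, σ.card = k ∧ f = Finsupp.single σ 1}

theorem chainCard_mono {V : Type*} [DecidableEq V] {K₁ K₂ : Set (Finset V)}
    (h : K₁ ⊆ K₂) (k : ℕ) : chainCard K₁ k ≤ chainCard K₂ k := by
  apply Submodule.span_mono
  rintro f ⟨σ, hσ, hc, rfl⟩
  exact ⟨σ, h hσ, hc, rfl⟩

/-- Cycles (in cardinality grading `k`, i.e. degree `k-1`) of a chain subcomplex `W`. -/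
noncomputable def cyclesOf {V : Type*} [DecidableEq V] (W : ℕ → Submodule (ZMod 2) (Ch V)) (k : ℕ) :
    Submodule (ZMod 2) (Ch V) :=
  W k ⊓ LinearMap.ker (bdry V)

/-- Boundaries (in cardinality grading `k`, i.e. degree `k-1`) of a chain subcomplex `W`. -/
noncomputable def bdriesOf {V : Type*} [DecidableEq V] (W : ℕ → Submodule (ZMod 2) (Ch V)) (k : ℕ) :
    Submodule (ZMod 2) (Ch V) :=
  Submodule.map (bdry V) (W (k + 1))

/-- Homology of the chain complex `W` in cardinality grading `k` (degree `k - 1`):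
cycles modulo boundaries. -/
abbrev homolOf {V : Type*} [DecidableEq V] (W : ℕ → Submodule (ZMod 2) (Ch V)) (k : ℕ) :=
  ↥(cyclesOf W k) ⧸ (bdriesOf W k).comap (cyclesOf W k).subtype

/-- The map on homology induced by a degreewise inclusion of chain complexes. -/
noncomputable def homolMap {V : Type*} [DecidableEq V]
    (W W' : ℕ → Submodule (ZMod 2) (Ch V)) (h : ∀ k, W k ≤ W' k) (k : ℕ) :
    homolOf W k →ₗ[ZMod 2] homolOf W' k :=
  Submodule.mapQ _ _ (Submodule.inclusion (inf_le_inf (h k) le_rfl))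
    (by
      intro x hx
      simp only [Submodule.mem_comap, Submodule.subtype_apply, Submodule.coe_inclusion]
        at hx ⊢
      exact Submodule.map_mono (h (k + 1)) hx)

/-! Persistence: birth and death in a simplex-wise filtration. -/

/-- The class `γ ∈ H_{k-1}(K j)` is born at index `j`: for every `j' < j`
no class of `H_{k-1}(K j')` is mapped to `γ` by the map induced by inclusion. -/
def BornAt {V : Type*} [DecidableEq V] (K : ℕ → Set (Finset V)) (k j : ℕ)
    (γ : homolOf (chainCard (K j)) k) : Prop :=
  ∀ j' < j, ∀ (h : K j' ⊆ K j), ∀ β : homolOf (chainCard (K j')) k,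
    homolMap (chainCard (K j')) (chainCard (K j)) (fun n => chainCard_mono h n) k β ≠ γ

/-- At index `d`, the image of the class `γ ∈ H_{k-1}(K j)` agrees with the image of
a class present strictly before index `j`. -/
def MergesAt {V : Type*} [DecidableEq V] (K : ℕ → Set (Finset V)) (k j : ℕ)
    (γ : homolOf (chainCard (K j)) k) (d : ℕ) : Prop :=
  ∃ j' < j, ∃ β : homolOf (chainCard (K j')) k,
    ∀ (h : K j ⊆ K d) (h' : K j' ⊆ K d),
      homolMap (chainCard (K j)) (chainCard (K d)) (fun n => chainCard_mono h n) k γ =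
      homolMap (chainCard (K j')) (chainCard (K d)) (fun n => chainCard_mono h' n) k β

/-- The class `γ ∈ H_{k-1}(K j)`, born at `j`, dies at index `d`: `d` is the smallest
index at which the image of `γ` coincides with the image of a class from an index
strictly before `j`. -/
def DiesAt {V : Type*} [DecidableEq V] (K : ℕ → Set (Finset V)) (k j : ℕ)
    (γ : homolOf (chainCard (K j)) k) (d : ℕ) : Prop :=
  j ≤ d ∧ MergesAt K k j γ d ∧ ∀ d', j ≤ d' → d' < d → ¬ MergesAt K k j γ d'

/-- The simplex added at index `i` gives birth to a homology class of degree `k - 1`. -/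
def GivesBirth {V : Type*} [DecidableEq V] (K : ℕ → Set (Finset V)) (k i : ℕ) : Prop :=
  ∃ γ : homolOf (chainCard (K i)) k, BornAt K k i γ

/-- The simplex added at index `i` kills a homology class of degree `k - 1`. -/
def Kills {V : Type*} [DecidableEq V] (K : ℕ → Set (Finset V)) (k i : ℕ) : Prop :=
  ∃ j, ∃ γ : homolOf (chainCard (K j)) k, BornAt K k j γ ∧ DiesAt K k j γ i

section Aux
variable {V : Type*} [DecidableEq V]

lemma erase_comm' (τ : Finset V) (a b : V) : (τ.erase a).erase b = (τ.erase b).erase a := by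
  ext x; simp only [Finset.mem_erase]; tauto

lemma bdry_single (τ : Finset V) :
    bdry V (Finsupp.single τ (1 : ZMod 2)) =
      if τ.card ≤ 1 then 0 else ∑ v ∈ τ, Finsupp.single (τ.erase v) (1 : ZMod 2) := by
  simp [bdry, Finsupp.linearCombination_single]

lemma bdry_bdry_single (τ : Finset V) :
    bdry V (bdry V (Finsupp.single τ (1 : ZMod 2))) = 0 := by
  rw [bdry_single]
  split_ifs with h1
  · simp
  · rw [map_sum]
    have hcard : ∀ v ∈ τ, (τ.erase v).card = τ.card - 1 := fun v hv =>
      Finset.card_erase_of_mem hv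
    by_cases h2 : τ.card ≤ 2
    · refine Finset.sum_eq_zero fun v hv => ?_
      rw [bdry_single, if_pos (by rw [hcard v hv]; omega)]
    · have key : ∀ v ∈ τ, bdry V (Finsupp.single (τ.erase v) (1 : ZMod 2)) =
          ∑ w ∈ τ.erase v, Finsupp.single ((τ.erase v).erase w) (1 : ZMod 2) := by
        intro v hv
        rw [bdry_single, if_neg (by rw [hcard v hv]; omega)]
      rw [Finset.sum_congr rfl key, Finset.sum_sigma']
      apply Finset.sum_involution
        (g := fun p _ => (⟨p.2, p.1⟩ : (_ : V) × V))
      · rintro ⟨v, w⟩ hp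
        rw [erase_comm' τ w v, ← Finsupp.single_add]
        have : (1 + 1 : ZMod 2) = 0 := by decide
        rw [this, Finsupp.single_zero]
      · rintro ⟨v, w⟩ hp _
        simp only [Finset.mem_sigma, Finset.mem_erase] at hp
        intro hcontra
        have : w = v := congrArg Sigma.fst hcontra
        exact hp.2.1 this
      · rintro ⟨v, w⟩ hp
        simp only [Finset.mem_sigma, Finset.mem_erase] at hp ⊢
        exact ⟨hp.2.2, Ne.symm hp.2.1, hp.1⟩
      · rintro ⟨v, w⟩ hp
        rfl

lemma bdry_bdry (f : Ch V) : bdry V (bdry V f) = 0 := by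
  induction f using Finsupp.induction_linear with
  | zero => simp
  | add f g hf hg => rw [map_add, map_add, hf, hg, add_zero]
  | single τ a =>
    have : Finsupp.single τ a = a • Finsupp.single τ (1 : ZMod 2) := by
      rw [Finsupp.smul_single, smul_eq_mul, mul_one]
    rw [this, map_smul, map_smul, bdry_bdry_single, smul_zero]

end Aux

section Aux2
variable {V : Type*} [DecidableEq V]

lemma chainCard_support {K : Set (Finset V)} {k : ℕ} {f : Ch V}
    (hf : f ∈ chainCard K k) : ∀ τ ∈ f.support, τ ∈ K := by
  have hle : chainCard K k ≤ Finsupp.supported (ZMod 2) (ZMod 2) K := by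
    rw [chainCard, Submodule.span_le]
    rintro g ⟨τ, hτ, hc, rfl⟩
    exact Finsupp.single_mem_supported (ZMod 2) 1 hτ
  intro τ hτ
  have h2 := hle hf
  rw [Finsupp.mem_supported] at h2
  exact h2 hτ

lemma single_mem_chainCard {K : Set (Finset V)} {k : ℕ} {σ : Finset V}
    (h : Finsupp.single σ (1 : ZMod 2) ∈ chainCard K k) : σ ∈ K := by
  apply chainCard_support h
  rw [Finsupp.support_single_ne_zero σ one_ne_zero]
  exact Finset.mem_singleton_self σ

lemma bdries_le_chain {K : Set (Finset V)} (hK : IsComplex K) (k : ℕ) :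
    Submodule.map (bdry V) (chainCard K (k + 1)) ≤ chainCard K k := by
  rw [chainCard, Submodule.map_span, Submodule.span_le]
  rintro _ ⟨f, ⟨τ, hτ, hc, rfl⟩, rfl⟩
  rw [SetLike.mem_coe, bdry_single]
  split_ifs with h
  · exact Submodule.zero_mem _
  · apply Submodule.sum_mem
    intro v hv
    apply Submodule.subset_span
    refine ⟨τ.erase v, ?_, ?_, rfl⟩
    · refine (hK τ hτ).2 _ (Finset.erase_subset _ _) ?_
      rw [← Finset.card_pos, Finset.card_erase_of_mem hv]; omega
    · rw [Finset.card_erase_of_mem hv, hc]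
      omega

lemma chainCard_union_ne {K : Set (Finset V)} {σ : Finset V} {n : ℕ} (h : σ.card ≠ n) :
    chainCard (K ∪ {σ}) n = chainCard K n := by
  apply le_antisymm
  · rw [chainCard, Submodule.span_le]
    rintro f ⟨τ, hτ, hc, rfl⟩
    rcases hτ with hτ | hτ
    · exact Submodule.subset_span ⟨τ, hτ, hc, rfl⟩
    · rw [Set.mem_singleton_iff] at hτ
      exact absurd (hτ ▸ hc) h
  · exact chainCard_mono Set.subset_union_left n

lemma chainCard_union_eq {K : Set (Finset V)} {σ : Finset V} {n : ℕ} (h : σ.card = n) :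
    chainCard (K ∪ {σ}) n =
      chainCard K n ⊔ Submodule.span (ZMod 2) {Finsupp.single σ (1 : ZMod 2)} := by
  apply le_antisymm
  · rw [chainCard, Submodule.span_le]
    rintro f ⟨τ, hτ, hc, rfl⟩
    rcases hτ with hτ | hτ
    · exact Submodule.mem_sup_left (Submodule.subset_span ⟨τ, hτ, hc, rfl⟩)
    · rw [Set.mem_singleton_iff] at hτ
      subst hτ
      exact Submodule.mem_sup_right (Submodule.subset_span rfl)
  · refine sup_le (chainCard_mono Set.subset_union_left n) ?_
    rw [Submodule.span_le, Set.singleton_subset_iff]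
    exact Submodule.subset_span ⟨σ, Or.inr rfl, h, rfl⟩

variable {W W' W'' : ℕ → Submodule (ZMod 2) (Ch V)}

lemma cyclesOf_mono (h : ∀ k, W k ≤ W' k) (k : ℕ) : cyclesOf W k ≤ cyclesOf W' k :=
  inf_le_inf (h k) le_rfl

lemma homolMap_mk (h : ∀ k, W k ≤ W' k) (k : ℕ) (x : Ch V) (hx : x ∈ cyclesOf W k) :
    homolMap W W' h k (Submodule.Quotient.mk ⟨x, hx⟩) =
      Submodule.Quotient.mk ⟨x, cyclesOf_mono h k hx⟩ := by
  rfl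

lemma homol_mk_eq (k : ℕ) {x y : Ch V} (hx : x ∈ cyclesOf W k) (hy : y ∈ cyclesOf W k) :
    (Submodule.Quotient.mk ⟨x, hx⟩ : homolOf W k) = Submodule.Quotient.mk ⟨y, hy⟩ ↔
      x - y ∈ bdriesOf W k := by
  rw [Submodule.Quotient.eq]
  simp [Submodule.mem_comap]

lemma homol_mk_eq_zero (k : ℕ) {x : Ch V} (hx : x ∈ cyclesOf W k) :
    (Submodule.Quotient.mk ⟨x, hx⟩ : homolOf W k) = 0 ↔ x ∈ bdriesOf W k := by
  rw [Submodule.Quotient.mk_eq_zero]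
  simp [Submodule.mem_comap]

lemma homolMap_self (h : ∀ k, W k ≤ W k) (k : ℕ) (γ : homolOf W k) :
    homolMap W W h k γ = γ := by
  obtain ⟨⟨x, hx⟩, rfl⟩ := Submodule.Quotient.mk_surjective _ γ
  rw [homolMap_mk]

lemma homolMap_comp (h : ∀ k, W k ≤ W' k) (h' : ∀ k, W' k ≤ W'' k) (k : ℕ)
    (γ : homolOf W k) :
    homolMap W' W'' h' k (homolMap W W' h k γ) =
      homolMap W W'' (fun n => (h n).trans (h' n)) k γ := by
  obtain ⟨⟨x, hx⟩, rfl⟩ := Submodule.Quotient.mk_surjective _ γ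
  rw [homolMap_mk, homolMap_mk, homolMap_mk]

end Aux2

/-- In a simplex-wise filtration, the `q`-simplex `σ i` added at step `i`
either kills a degree-`(q-1)` homology class or gives birth to a degree-`q` homology
class, and exactly one of these occurs. -/
theorem kills_xor_givesBirth {V : Type*} [Fintype V] [DecidableEq V]
    (m : ℕ) (K : ℕ → Set (Finset V)) (σs : ℕ → Finset V)
    (hK0 : K 0 = ∅)
    (hcx : ∀ i ≤ m, IsComplex (K i))
    (hstep : ∀ i, 1 ≤ i → i ≤ m → σs i ∉ K (i - 1) ∧ K i = K (i - 1) ∪ {σs i})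
    (q i : ℕ) (hi1 : 1 ≤ i) (him : i ≤ m) (hq : (σs i).card = q + 1) :
    Xor' (Kills K q i) (GivesBirth K (q + 1) i) := by
  classical
  obtain ⟨hσnot, hKi⟩ := hstep i hi1 him
  set σ := σs i with hσdef
  set σ' : Ch V := Finsupp.single σ (1 : ZMod 2) with hσ'def
  -- monotonicity of the filtration
  have mono : ∀ b ≤ m, ∀ a ≤ b, K a ⊆ K b := by
    intro b
    induction b with
    | zero => intro _ a ha; rw [Nat.le_zero.mp ha]
    | succ n ih =>
      intro hbm a ha
      by_cases hcase : a = n + 1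
      · rw [hcase]
      · have h1 : K a ⊆ K n := ih (by omega) a (by omega)
        have h2 : K n ⊆ K (n + 1) := by
          have hs := (hstep (n + 1) (by omega) hbm).2
          simp only [Nat.add_sub_cancel] at hs
          rw [hs]
          exact Set.subset_union_left
        exact h1.trans h2
  have char2 : ∀ x : Ch V, x + x = 0 := by
    intro x
    rw [← two_smul (ZMod 2) x, show (2 : ZMod 2) = 0 from rfl, zero_smul]
  have hcxL : IsComplex (K (i - 1)) := hcx (i - 1) (by omega)
  have hcxI : IsComplex (K i) := hcx i him
  have hKsub : K (i - 1) ⊆ K i := mono i him (i - 1) (by omega)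
  have hWq : chainCard (K i) q = chainCard (K (i - 1)) q := by
    rw [hKi]; exact chainCard_union_ne (by omega)
  have hWq2 : chainCard (K i) (q + 2) = chainCard (K (i - 1)) (q + 2) := by
    rw [hKi]; exact chainCard_union_ne (by omega)
  have hWq1 : chainCard (K i) (q + 1) =
      chainCard (K (i - 1)) (q + 1) ⊔ Submodule.span (ZMod 2) {σ'} := by
    rw [hKi]; exact chainCard_union_eq hq
  have hσI : σ' ∈ chainCard (K i) (q + 1) :=
    Submodule.subset_span ⟨σ, by rw [hKi]; exact Or.inr rfl, hq, rfl⟩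
  have hbdry_mem : bdry V σ' ∈ chainCard (K (i - 1)) q := by
    rw [← hWq]
    exact bdries_le_chain hcxI q ⟨_, hσI, rfl⟩
  have hcyc : bdry V σ' ∈ cyclesOf (chainCard (K (i - 1))) q :=
    Submodule.mem_inf.mpr ⟨hbdry_mem, by rw [LinearMap.mem_ker]; exact bdry_bdry_single σ⟩
  by_cases hc : bdry V σ' ∈ bdriesOf (chainCard (K (i - 1))) q
  · -- Case B : σ gives birth
    right
    obtain ⟨c, hcmem, hceq⟩ := hc
    constructor
    · -- GivesBirth
      have hz_cyc : σ' + c ∈ cyclesOf (chainCard (K i)) (q + 1) := by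
        refine Submodule.mem_inf.mpr ⟨?_, ?_⟩
        · exact Submodule.add_mem _ hσI (chainCard_mono hKsub _ hcmem)
        · rw [LinearMap.mem_ker, map_add, hceq, char2]
      refine ⟨Submodule.Quotient.mk ⟨σ' + c, hz_cyc⟩, ?_⟩
      intro j' hj' h β heq
      obtain ⟨⟨w, hw⟩, rfl⟩ := Submodule.Quotient.mk_surjective _ β
      rw [homolMap_mk, homol_mk_eq] at heq
      have h1 : w - (σ' + c) ∈ chainCard (K (i - 1)) (q + 1) := by
        have hle : bdriesOf (chainCard (K i)) (q + 1) ≤ chainCard (K (i - 1)) (q + 1) := by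
          rw [bdriesOf, hWq2]
          exact bdries_le_chain hcxL (q + 1)
        exact hle heq
      have hj'sub : K j' ⊆ K (i - 1) := mono (i - 1) (by omega) j' (by omega)
      have hwW : w ∈ chainCard (K (i - 1)) (q + 1) :=
        chainCard_mono hj'sub _ (Submodule.mem_inf.mp hw).1
      have hσW : σ' ∈ chainCard (K (i - 1)) (q + 1) := by
        have : σ' = (w - (w - (σ' + c))) - c := by abel
        rw [this]
        exact Submodule.sub_mem _ (Submodule.sub_mem _ hwW h1) hcmem
      exact hσnot (single_mem_chainCard hσW)
    · -- ¬ Kills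
      rintro ⟨j, γ', hborn, hjle, hmerge, hmin⟩
      rcases eq_or_lt_of_le hjle with rfl | hjlt
      · obtain ⟨j', hj'i, β, hEq⟩ := hmerge
        have h2 : K j' ⊆ K j := mono j him j' (by omega)
        have := hEq subset_rfl h2
        rw [homolMap_self] at this
        exact hborn j' hj'i h2 β this.symm
      · -- injectivity of H_{q-1}(K (i-1)) → H_{q-1}(K i)
        have hble : bdriesOf (chainCard (K i)) q ≤ bdriesOf (chainCard (K (i - 1))) q := by
          rw [bdriesOf, bdriesOf, hWq1, Submodule.map_sup]
          refine sup_le le_rfl ?_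
          rw [Submodule.map_span, Submodule.span_le]
          rintro _ ⟨f, hf, rfl⟩
          rw [Set.mem_singleton_iff] at hf
          subst hf
          exact ⟨c, hcmem, hceq⟩
        have hinj : ∀ x y : homolOf (chainCard (K (i - 1))) q,
            homolMap _ _ (fun n => chainCard_mono hKsub n) q x =
            homolMap _ _ (fun n => chainCard_mono hKsub n) q y → x = y := by
          intro x y hxy
          obtain ⟨⟨a, ha⟩, rfl⟩ := Submodule.Quotient.mk_surjective _ x
          obtain ⟨⟨b, hb⟩, rfl⟩ := Submodule.Quotient.mk_surjective _ y
          rw [homolMap_mk, homolMap_mk, homol_mk_eq] at hxy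
          rw [homol_mk_eq]
          exact hble hxy
        apply hmin (i - 1) (by omega) (by omega)
        obtain ⟨j', hj'j, β, hEq⟩ := hmerge
        refine ⟨j', hj'j, β, ?_⟩
        intro h h'
        have key := hEq (mono i him j (le_of_lt hjlt)) ((h'.trans hKsub))
        apply hinj
        rw [homolMap_comp, homolMap_comp]
        exact key
  · -- Case A : σ kills
    left
    constructor
    · -- Kills
      set D : homolOf (chainCard (K (i - 1))) q := Submodule.Quotient.mk ⟨bdry V σ', hcyc⟩
        with hDdef
      have hD0 : D ≠ 0 := fun h => hc ((homol_mk_eq_zero q hcyc).mp h)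
      set P : ℕ → Prop := fun j => ∃ β : homolOf (chainCard (K j)) q, j ≤ i - 1 ∧
        ∀ (h : K j ⊆ K (i - 1)),
          homolMap _ _ (fun n => chainCard_mono h n) q β = D with hPdef
      have hex : ∃ j, P j := ⟨i - 1, D, le_rfl, fun h => homolMap_self _ _ _⟩
      set j₀ := Nat.find hex with hj₀def
      have hspec : P j₀ := Nat.find_spec hex
      obtain ⟨β, hjle, hβ⟩ := hspec
      have hj₀pos : 1 ≤ j₀ := by
        by_contra hj0
        have hj0' : j₀ = 0 := by omega
        have hβ0 : β = 0 := by
          obtain ⟨⟨x, hx⟩, rfl⟩ := Submodule.Quotient.mk_surjective _ β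
          have hx1 : x ∈ chainCard (K j₀) q := (Submodule.mem_inf.mp hx).1
          rw [hj0', hK0] at hx1
          have hbot : chainCard (∅ : Set (Finset V)) q = ⊥ := by
            rw [chainCard]
            convert Submodule.span_empty
            ext f
            simp
          rw [hbot, Submodule.mem_bot] at hx1
          rw [homol_mk_eq_zero]
          rw [hx1]
          exact Submodule.zero_mem _
        have := hβ (by rw [hj0', hK0]; exact Set.empty_subset _)
        rw [hβ0, map_zero] at this
        exact hD0 this.symm
      refine ⟨j₀, β, ?_, ?_, ?_, ?_⟩
      · -- BornAt
        intro j' hj' h β' hmapeq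
        refine absurd ?_ (Nat.find_min hex hj')
        refine ⟨β', by omega, fun h'' => ?_⟩
        have hj₀sub : K j₀ ⊆ K (i - 1) := mono (i - 1) (by omega) j₀ hjle
        calc homolMap _ _ (fun n => chainCard_mono h'' n) q β'
            = homolMap _ _ (fun n => chainCard_mono hj₀sub n) q
                (homolMap _ _ (fun n => chainCard_mono h n) q β') := by
              rw [homolMap_comp]
          _ = homolMap _ _ (fun n => chainCard_mono hj₀sub n) q β := by rw [hmapeq]
          _ = D := hβ hj₀sub
      · omega
      · -- MergesAt at i
        refine ⟨0, by omega, 0, fun h h' => ?_⟩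
        rw [map_zero]
        have hj₀sub : K j₀ ⊆ K (i - 1) := mono (i - 1) (by omega) j₀ hjle
        calc homolMap _ _ (fun n => chainCard_mono h n) q β
            = homolMap _ _ (fun n => chainCard_mono hKsub n) q
                (homolMap _ _ (fun n => chainCard_mono hj₀sub n) q β) := by
              rw [homolMap_comp]
          _ = homolMap _ _ (fun n => chainCard_mono hKsub n) q D := by rw [hβ hj₀sub]
          _ = 0 := by
              rw [hDdef, homolMap_mk, homol_mk_eq_zero]
              exact ⟨σ', hσI, rfl⟩
      · -- minimality
        intro d' hd'ge hd'lt hM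
        obtain ⟨j', hj'lt, β', hEq⟩ := hM
        have h1 : K j₀ ⊆ K d' := mono d' (by omega) j₀ hd'ge
        have h2 : K j' ⊆ K d' := mono d' (by omega) j' (by omega)
        have h3 : K d' ⊆ K (i - 1) := mono (i - 1) (by omega) d' (by omega)
        have key := hEq h1 h2
        refine absurd ?_ (Nat.find_min hex hj'lt)
        refine ⟨β', by omega, fun h'' => ?_⟩
        have hj₀sub : K j₀ ⊆ K (i - 1) := mono (i - 1) (by omega) j₀ hjle
        calc homolMap _ _ (fun n => chainCard_mono h'' n) q β'
            = homolMap _ _ (fun n => chainCard_mono h3 n) q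
                (homolMap _ _ (fun n => chainCard_mono h2 n) q β') := by
              rw [homolMap_comp]
          _ = homolMap _ _ (fun n => chainCard_mono h3 n) q
                (homolMap _ _ (fun n => chainCard_mono h1 n) q β) := by rw [key]
          _ = homolMap _ _ (fun n => chainCard_mono hj₀sub n) q β := by rw [homolMap_comp]
          _ = D := hβ hj₀sub
    · -- ¬ GivesBirth
      rintro ⟨γ, hborn⟩
      obtain ⟨⟨z, hz⟩, rfl⟩ := Submodule.Quotient.mk_surjective _ γ
      obtain ⟨hzW', hzker⟩ := Submodule.mem_inf.mp hz
      have hz1 : z ∈ chainCard (K (i - 1)) (q + 1) ⊔ Submodule.span (ZMod 2) {σ'} := by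
        rw [← hWq1]; exact hzW'
      rw [Submodule.mem_sup] at hz1
      obtain ⟨cc, hcmem, s, hs, hzeq⟩ := hz1
      rw [Submodule.mem_span_singleton] at hs
      obtain ⟨a, rfl⟩ := hs
      have hzW : z ∈ chainCard (K (i - 1)) (q + 1) := by
        have ha : a = 0 := by
          by_contra hne
          have ha1 : a = 1 := by
            rcases (show ∀ x : ZMod 2, x = 0 ∨ x = 1 by decide) a with h | h
            · exact absurd h hne
            · exact h
          apply hc
          refine ⟨cc, hcmem, ?_⟩
          have h0 : bdry V z = 0 := hzker
          rw [← hzeq, map_add, ha1, one_smul] at h0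
          have := congrArg (fun t => t + bdry V σ') h0
          simp only [zero_add] at this
          rw [add_assoc, char2, add_zero] at this
          exact this
        rw [← hzeq, ha, zero_smul, add_zero]
        exact hcmem
      have hzcyc : z ∈ cyclesOf (chainCard (K (i - 1))) (q + 1) :=
        Submodule.mem_inf.mpr ⟨hzW, hzker⟩
      exact hborn (i - 1) (by omega) hKsub (Submodule.Quotient.mk ⟨z, hzcyc⟩)
        (by rw [homolMap_mk])
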